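/- Fix an integer N ≥ 1, α ∈ (0,1), λ ∈ [0,1], and Z : Fin N → ℝ. Let σ be a permutation of {1,…,N} such that i ↦ Z(σ(i)) is monotone nondecreasing, and define ζ̄ : Fin N → ℝ by ζ̄_{σ(i)} := N·𝔮_i for i = 1,…,N (with κ = ⌈(1-α)N⌉). Then ζ̄ ∈ 𝔄 (i.e., ζ̄ = (1-λ)·1 + λ·η for some η ∈ 𝔄_α) and E_{ζ̄}[Z] = ρ_{λ,α}(Z); that is, the worst-case probability density for ρ_{λ,α} at Z is obtained by assigning weight 𝔮_i to the outcome with the i-th smallest value of Z. -/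

import Mathlib

/-- Average Value at Risk: `AV@R_α(Z) = inf_u ( u + 1/(αN) Σᵢ max(Zᵢ - u, 0) )`. -/
noncomputable def avar (N : ℕ) (α : ℝ) (Z : Fin N → ℝ) : ℝ :=
  ⨅ u : ℝ, (u + 1 / (α * N) * ∑ i, max (Z i - u) 0)

/-- The risk measure `ρ_{λ,α}(Z) = (1-λ)·(1/N)ΣᵢZᵢ + λ·AV@R_α(Z)`. -/
noncomputable def rho (N : ℕ) (α lam : ℝ) (Z : Fin N → ℝ) : ℝ :=
  (1 - lam) * ((1 / N : ℝ) * ∑ i, Z i) + lam * avar N α Z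

/-- `κ = ⌈(1-α)N⌉`. -/
noncomputable def kap (N : ℕ) (α : ℝ) : ℕ := ⌈(1 - α) * (N : ℝ)⌉₊

/-- The `k`-th order statistic `Z₍ₖ₎` (1-indexed), given a sorting permutation `σ`. -/
noncomputable def sortedVal (N : ℕ) (Z : Fin N → ℝ) (σ : Equiv.Perm (Fin N)) (k : ℕ) : ℝ :=
  if h : k - 1 < N then Z (σ ⟨k - 1, h⟩) else 0

/-- The worst-case weights `𝔮ᵢ` (1-indexed). -/
noncomputable def qw (N : ℕ) (α lam : ℝ) (i : ℕ) : ℝ :=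
  if i < kap N α then (1 - lam) / N
  else if i = kap N α then (1 - lam) / N + lam - lam * ((N : ℝ) - (kap N α : ℝ)) / (α * N)
  else (1 - lam) / N + lam / (α * N)

/-- The dual set `𝔄_α` of densities for `AV@R_α`. -/
def Aalpha (N : ℕ) (α : ℝ) : Set (Fin N → ℝ) :=
  {η | (∀ i, 0 ≤ η i ∧ η i ≤ 1 / α) ∧ (1 / N : ℝ) * ∑ i, η i = 1}

/-- The dual set `𝔄 = (1-λ)·1 + λ·𝔄_α` of densities for `ρ_{λ,α}`. -/
def Aset (N : ℕ) (α lam : ℝ) : Set (Fin N → ℝ) :=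
  {ζ | ∃ η ∈ Aalpha N α, ζ = fun i => (1 - lam) * 1 + lam * η i}

/-- Expectation `E_ζ[Z] = (1/N) Σᵢ ζᵢ Zᵢ` with respect to density `ζ`. -/
noncomputable def Eexp (N : ℕ) (ζ Z : Fin N → ℝ) : ℝ := (1 / N : ℝ) * ∑ i, ζ i * Z i

lemma max_ge_aux (t x : ℝ) (h0 : 0 ≤ t) (h1 : t ≤ 1) : t * x ≤ max x 0 := by
  rcases le_or_gt 0 x with hx | hx
  · calc t * x ≤ 1 * x := by nlinarith
    _ = x := one_mul x
    _ ≤ max x 0 := le_max_left _ _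
  · calc t * x ≤ 0 := by nlinarith
    _ ≤ max x 0 := le_max_right _ _

lemma dual_lb (N : ℕ) (hN : 1 ≤ N) (α : ℝ) (hα0 : 0 < α) (Z η : Fin N → ℝ)
    (hη : η ∈ Aalpha N α) (u : ℝ) :
    (1 / N : ℝ) * ∑ i, η i * Z i ≤ u + 1 / (α * N) * ∑ i, max (Z i - u) 0 := by
  have hNR : (0:ℝ) < N := by exact_mod_cast hN
  obtain ⟨hb, hm⟩ := hη
  have hsum : ∑ i, η i = N := by
    field_simp at hm
    linarith
  have hpt : ∀ i : Fin N, α * η i * (Z i - u) ≤ max (Z i - u) 0 := by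
    intro i
    apply max_ge_aux
    · have := (hb i).1; positivity
    · have h2 := (hb i).2
      have : α * η i ≤ α * (1/α) := by
        apply mul_le_mul_of_nonneg_left h2 hα0.le
      rwa [mul_one_div, div_self hα0.ne'] at this
  have hsum2 : ∑ i, α * η i * (Z i - u) ≤ ∑ i, max (Z i - u) 0 :=
    Finset.sum_le_sum fun i _ => hpt i
  have hexp : ∑ i, α * η i * (Z i - u) = α * (∑ i, η i * Z i) - α * u * N := by
    have h1 : ∀ i : Fin N, α * η i * (Z i - u) = α * (η i * Z i) - α * u * η i := by
      intro i; ring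
    simp_rw [h1]
    rw [Finset.sum_sub_distrib, ← Finset.mul_sum, ← Finset.mul_sum, hsum]
  have hpos : (0:ℝ) < 1 / (α * N) := by positivity
  have key : u + 1/(α*N) * (α * (∑ i, η i * Z i) - α * u * N)
      = (1/N : ℝ) * ∑ i, η i * Z i := by
    field_simp
    ring
  calc (1 / N : ℝ) * ∑ i, η i * Z i
      = u + 1/(α*N) * (α * (∑ i, η i * Z i) - α * u * N) := key.symm
    _ = u + 1/(α*N) * ∑ i, α * η i * (Z i - u) := by rw [hexp]
    _ ≤ u + 1/(α*N) * ∑ i, max (Z i - u) 0 := by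
        have := mul_le_mul_of_nonneg_left hsum2 hpos.le
        linarith

/-- the worst-case density for `ρ_{λ,α}` at `Z` assigns weight `𝔮ᵢ`
(density `N·𝔮ᵢ`) to the outcome with the `i`-th smallest value of `Z`: the function
`ζ̄` with `ζ̄_{σ(i)} = N·𝔮ᵢ` belongs to `𝔄` and satisfies `E_ζ̄[Z] = ρ_{λ,α}(Z)`. -/
theorem worst_case_density (N : ℕ) (hN : 1 ≤ N) (α lam : ℝ)
    (hα0 : 0 < α) (hα1 : α < 1) (hlam0 : 0 ≤ lam) (hlam1 : lam ≤ 1)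
    (Z : Fin N → ℝ) (σ : Equiv.Perm (Fin N)) (hσ : Monotone fun i => Z (σ i)) :
    (fun j => (N : ℝ) * qw N α lam ((σ.symm j).1 + 1)) ∈ Aset N α lam ∧
    Eexp N (fun j => (N : ℝ) * qw N α lam ((σ.symm j).1 + 1)) Z = rho N α lam Z := by
  have hNR : (0:ℝ) < N := by exact_mod_cast hN
  have hN0 : (N:ℝ) ≠ 0 := hNR.ne'
  set κ : ℕ := kap N α with hκdef
  have haN : (0:ℝ) ≤ (1 - α) * N := by nlinarith
  have hκ1 : 1 ≤ κ := by
    rw [hκdef, kap]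
    exact Nat.ceil_pos.mpr (by nlinarith)
  have hκN : κ ≤ N := by
    rw [hκdef, kap]
    refine Nat.ceil_le.mpr ?_
    nlinarith
  have hle : (1 - α) * N ≤ (κ : ℝ) := by
    rw [hκdef, kap]; exact Nat.le_ceil _
  have hlt : (κ : ℝ) < (1 - α) * N + 1 := by
    rw [hκdef, kap]; exact Nat.ceil_lt_add_one haN
  have hκNR : (κ : ℝ) ≤ N := by exact_mod_cast hκN
  have hκlt : κ - 1 < N := by omega
  set i₀ : Fin N := ⟨κ - 1, hκlt⟩ with hi₀
  set u₀ : ℝ := Z (σ i₀) with hu₀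
  set a : ℝ := (N:ℝ) - ((N:ℝ) - κ)/α with ha
  have ha0 : 0 ≤ a := by
    rw [ha]
    have : ((N:ℝ) - κ)/α ≤ N := by
      rw [div_le_iff₀ hα0]; nlinarith
    linarith
  have ha1 : a ≤ 1/α := by
    rw [ha, sub_le_iff_le_add, ← add_div, le_div_iff₀ hα0]
    nlinarith
  set η : Fin N → ℝ := fun j =>
    if (σ.symm j).1 + 1 < κ then 0
    else if (σ.symm j).1 + 1 = κ then a else 1/α with hη
  have hsumη : ∑ j, η j = N := by
    have h1 : ∑ j, η j = ∑ i, η (σ i) := (Equiv.sum_comp σ η).symm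
    rw [h1]
    have h2 : ∀ i : Fin N, η (σ i) =
        (fun k : ℕ => if k + 1 < κ then (0:ℝ) else if k + 1 = κ then a else 1/α) i.1 := by
      intro i; simp [hη]
    simp_rw [h2]
    rw [Fin.sum_univ_eq_sum_range (fun k => if k + 1 < κ then (0:ℝ) else if k + 1 = κ then a else 1/α) N]
    have h3 : ∀ k ∈ Finset.range N,
        (if k + 1 < κ then (0:ℝ) else if k + 1 = κ then a else 1/α)
        = (if k = κ - 1 then a else 0) + (if κ ≤ k then 1/α else 0) := by
      intro k _
      rcases Nat.lt_trichotomy (k+1) κ with h | h | h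
      · rw [if_pos h, if_neg (by omega), if_neg (by omega)]; ring
      · rw [if_neg (by omega), if_pos h, if_pos (by omega), if_neg (by omega)]; ring
      · rw [if_neg (by omega), if_neg (by omega), if_neg (by omega), if_pos (by omega)]; ring
    rw [Finset.sum_congr rfl h3, Finset.sum_add_distrib,
      Finset.sum_ite_eq' (Finset.range N) (κ-1) (fun _ => a),
      if_pos (Finset.mem_range.mpr (by omega)),
      ← Finset.sum_filter (fun k => κ ≤ k) (fun _ => (1:ℝ)/α)]
    have h4 : (Finset.range N).filter (fun k => κ ≤ k) = Finset.Ico κ N := by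
      ext k; simp [Finset.mem_filter, Finset.mem_range, Finset.mem_Ico]; omega
    rw [h4, Finset.sum_const, Nat.card_Ico, nsmul_eq_mul, ha]
    have : ((N - κ : ℕ) : ℝ) = (N:ℝ) - κ := by
      push_cast [Nat.cast_sub hκN]; ring
    rw [this]
    field_simp
    ring
  have hηmem : η ∈ Aalpha N α := by
    constructor
    · intro j
      simp only [hη]
      split_ifs
      · exact ⟨le_refl 0, by positivity⟩
      · exact ⟨ha0, ha1⟩
      · exact ⟨by positivity, le_refl _⟩
    · rw [hsumη]; field_simp
  -- pointwise identity at u₀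
  have hpt : ∀ j : Fin N, max (Z j - u₀) 0 = α * η j * (Z j - u₀) := by
    intro j
    have hj : Z j = Z (σ (σ.symm j)) := by rw [Equiv.apply_symm_apply]
    rcases Nat.lt_trichotomy ((σ.symm j).1 + 1) κ with h | h | h
    · have hle' : Z j ≤ u₀ := by
        rw [hj, hu₀]
        exact hσ (by simp [hi₀, Fin.le_def]; omega)
      have : η j = 0 := by simp [hη, if_pos h]
      rw [this, max_eq_right (by linarith)]; ring
    · have : σ.symm j = i₀ := by
        apply Fin.ext; simp [hi₀]; omega
      have hzj : Z j = u₀ := by rw [hj, this]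
      have : Z j - u₀ = 0 := by rw [hzj]; ring
      rw [this]; simp
    · have hge : u₀ ≤ Z j := by
        rw [hj, hu₀]
        exact hσ (by simp [hi₀, Fin.le_def]; omega)
      have hηj : η j = 1/α := by
        simp only [hη]
        rw [if_neg (by omega), if_neg (by omega)]
      rw [hηj, max_eq_left (by linarith)]
      field_simp
  have hatt : u₀ + 1/(α*N) * ∑ j, max (Z j - u₀) 0 = (1/N : ℝ) * ∑ j, η j * Z j := by
    simp_rw [hpt]
    have hexp : ∑ j, α * η j * (Z j - u₀) = α * (∑ j, η j * Z j) - α * u₀ * N := by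
      have h1 : ∀ j : Fin N, α * η j * (Z j - u₀) = α * (η j * Z j) - α * u₀ * η j := by
        intro j; ring
      simp_rw [h1]
      rw [Finset.sum_sub_distrib, ← Finset.mul_sum, ← Finset.mul_sum, hsumη]
    rw [hexp]
    field_simp
    ring
  have havar : avar N α Z = (1/N : ℝ) * ∑ j, η j * Z j := by
    rw [avar]
    apply le_antisymm
    · calc (⨅ u : ℝ, (u + 1 / (α * N) * ∑ i, max (Z i - u) 0))
          ≤ u₀ + 1 / (α * N) * ∑ i, max (Z i - u₀) 0 := by
            refine ciInf_le ⟨(1/N : ℝ) * ∑ j, η j * Z j, ?_⟩ u₀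
            rintro x ⟨u, rfl⟩
            exact dual_lb N hN α hα0 Z η hηmem u
        _ = (1/N : ℝ) * ∑ j, η j * Z j := hatt
    · exact le_ciInf fun u => dual_lb N hN α hα0 Z η hηmem u
  have hζ : (fun j => (N : ℝ) * qw N α lam ((σ.symm j).1 + 1))
      = fun j => (1 - lam) * 1 + lam * η j := by
    funext j
    simp only [qw, hη, ← hκdef]
    rcases Nat.lt_trichotomy ((σ.symm j).1 + 1) κ with h | h | h
    · rw [if_pos h, if_pos h]
      field_simp
      ring
    · rw [if_neg (by omega), if_pos h, if_neg (by omega), if_pos h, ha]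
      field_simp
      ring
    · rw [if_neg (by omega), if_neg (by omega), if_neg (by omega), if_neg (by omega)]
      field_simp
  constructor
  · exact ⟨η, hηmem, hζ⟩
  · rw [Eexp, rho, havar]
    simp_rw [congrFun hζ]
    have h1 : ∀ j : Fin N, ((1 - lam) * 1 + lam * η j) * Z j
        = (1 - lam) * Z j + lam * (η j * Z j) := by intro j; ring
    simp_rw [h1]
    rw [Finset.sum_add_distrib, ← Finset.mul_sum, ← Finset.mul_sum]
    ring
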